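/- Let V be an even lattice, σ an isometry of V, and c ∈ V a root (⟨c,c⟩ = −2). Then in ℤ[[t]] one has det(id − t·(σ∘s_c)^{-1}) = det(id − t·σ^{-1}) · (1 − Σ_{k≥1} ⟨c, σ^k(c)⟩ t^k), where both determinants are taken of ℤ[[t]]-linear endomorphisms of ℤ[[t]] ⊗ V (equivalently, the left-hand factors are the reversed characteristic polynomials of (σ∘s_c)^{-1} and σ^{-1}). -/

import Mathlib

/-- The determinant of the endomorphism `id − t·f` of `ℤ[[t]] ⊗ V`, i.e. the
reversed characteristic polynomial of `f`, computed via the matrix of `f`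
in the basis `b`, as an element of `ℤ[[t]]`. -/
noncomputable def detOneSubT {ι V : Type*} [Fintype ι] [DecidableEq ι]
    [AddCommGroup V] [Module ℤ V] (b : Module.Basis ι ℤ V) (f : V →ₗ[ℤ] V) :
    PowerSeries ℤ :=
  Matrix.det
    (1 - (PowerSeries.X : PowerSeries ℤ) •
      (LinearMap.toMatrix b b f).map (PowerSeries.C (R := ℤ)))

open PowerSeries Matrix

private lemma stmt7_geomInv {ι : Type*} [Fintype ι] [DecidableEq ι] (M : Matrix ι ι ℤ) :
    ((1 : Matrix ι ι (PowerSeries ℤ)) -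
        (PowerSeries.X : PowerSeries ℤ) • M.map (PowerSeries.C (R := ℤ))) *
      (Matrix.of fun i j => PowerSeries.mk fun k => (M ^ k) i j) = 1 := by
  ext i j n
  rw [Matrix.sub_mul, Matrix.one_mul, Matrix.sub_apply, Matrix.mul_apply]
  have hterm : ∀ k : ι,
      ((X : ℤ⟦X⟧) • M.map (C (R := ℤ))) i k * (Matrix.of fun i j => mk fun m => (M ^ m) i j) k j
        = X * (C (R := ℤ) (M i k) * mk fun m => (M ^ m) k j) := by
    intro k
    simp [Matrix.smul_apply, Matrix.map_apply, smul_eq_mul, mul_assoc]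
  rw [map_sub, map_sum]
  simp_rw [hterm]
  cases n with
  | zero =>
      simp [coeff_zero_X_mul, Matrix.one_apply, coeff_mk, apply_ite (PowerSeries.coeff (R := ℤ) 0)]
  | succ n =>
      simp only [coeff_succ_X_mul, coeff_C_mul, coeff_mk, Matrix.of_apply]
      have h1 : ∑ k : ι, M i k * (M ^ n) k j = (M ^ (n+1)) i j := by
        rw [pow_succ']
        rw [Matrix.mul_apply]
      rw [h1, sub_self]
      have : ((1 : Matrix ι ι ℤ⟦X⟧) i j) = C (R := ℤ) ((1 : Matrix ι ι ℤ) i j) := by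
        simp [Matrix.one_apply, apply_ite (C (R := ℤ))]
      rw [this, coeff_C]
      simp

private lemma stmt7_detUnit {ι α : Type*} [Fintype ι] [DecidableEq ι] [CommRing α]
    (u v : ι → α) (S : Matrix ι ι α) :
    (1 + Matrix.replicateRow Unit v * S * Matrix.replicateCol Unit u).det
      = 1 + ∑ k : ι, (∑ j : ι, v j * S j k) * u k := by
  rw [Matrix.det_unique]
  simp [Matrix.mul_apply, Matrix.add_apply, Matrix.one_apply, Finset.sum_mul]

private lemma stmt7_scalar {ι : Type*} [Fintype ι] [DecidableEq ι]
    (A : Matrix ι ι ℤ) (w r : ι → ℤ) (g : ℕ → ℤ)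
    (hg : ∀ n, ∑ j : ι, r j * ∑ k : ι, (A ^ n) j k * w k = g n) :
    1 + ∑ k : ι, (∑ j : ι, PowerSeries.C (R := ℤ) (r j) * PowerSeries.mk (fun m => (A ^ m) j k)) *
        (-(PowerSeries.X * PowerSeries.C (R := ℤ) (w k)))
      = PowerSeries.mk fun n => if n = 0 then 1 else -(g (n - 1)) := by
  have hterm : ∀ k : ι,
      (∑ j : ι, C (R := ℤ) (r j) * mk (fun m => (A ^ m) j k)) * (-(X * C (R := ℤ) (w k)))
        = -(X * (C (R := ℤ) (w k) * ∑ j : ι, C (R := ℤ) (r j) * mk (fun m => (A ^ m) j k))) := by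
    intro k; ring
  apply PowerSeries.ext
  intro n
  simp_rw [hterm]
  rw [map_add, map_sum]
  cases n with
  | zero => simp
  | succ n =>
    simp only [map_neg, coeff_succ_X_mul, coeff_C_mul, map_sum, coeff_C_mul, coeff_mk,
      coeff_mk, coeff_one, Nat.succ_ne_zero, if_false, zero_add]
    have h1 : ∑ k : ι, -(w k * ∑ j : ι, r j * (A ^ n) j k)
        = -∑ k : ι, ∑ j : ι, w k * (r j * (A ^ n) j k) := by
      simp [Finset.mul_sum]
    rw [show n + 1 - 1 = n from rfl, ← hg n, h1, Finset.sum_comm, neg_inj]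
    apply Finset.sum_congr rfl
    intro j _
    rw [Finset.mul_sum]
    apply Finset.sum_congr rfl
    intro k _
    ring

/-- for an isometry `σ` of an even lattice `V` and a root `c`
(with reflection `s_c`, and `τ = σ ∘ s_c`), one has in `ℤ[[t]]`:
`det(id − t·(σ∘s_c)⁻¹) = det(id − t·σ⁻¹) · (1 − Σ_{k≥1} ⟨c, σ^k(c)⟩ t^k)`. -/
theorem stmt7 {ι V : Type*} [Fintype ι] [DecidableEq ι]
    [AddCommGroup V] [Module ℤ V]
    (b : Module.Basis ι ℤ V)
    (B : V →ₗ[ℤ] V →ₗ[ℤ] ℤ)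
    (hsymm : ∀ x y, B x y = B y x)
    (heven : ∀ x, Even (B x x))
    (σ : V ≃ₗ[ℤ] V) (hσ : ∀ x y, B (σ x) (σ y) = B x y)
    (c : V) (hc : B c c = -2)
    (τ : V ≃ₗ[ℤ] V) (hτ : ∀ x, τ x = σ (x + B x c • c)) :
    detOneSubT b (τ⁻¹ : V ≃ₗ[ℤ] V).toLinearMap
      = detOneSubT b (σ⁻¹ : V ≃ₗ[ℤ] V).toLinearMap *
        PowerSeries.mk (fun k => if k = 0 then 1 else -(B c ((σ ^ k) c))) := by
  classical
  have hbridge : ∀ (n : ℤ) (y : V), LinearMap.toSpanSingleton ℤ V y n = n • y := by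
    intro n y
    rw [LinearMap.toSpanSingleton_apply, ← Int.cast_smul_eq_zsmul ℤ n y, Int.cast_id]
  -- data
  set f : V →ₗ[ℤ] V := (σ⁻¹ : V ≃ₗ[ℤ] V).toLinearMap with hf
  set A : Matrix ι ι ℤ := LinearMap.toMatrix b b f with hA
  set w : ι → ℤ := fun i => b.repr c i with hw
  set r : ι → ℤ := fun j => B (b j) (σ c) with hr
  -- the inverse of τ as a linear map
  have hss : ∀ x, σ ((σ⁻¹ : V ≃ₗ[ℤ] V) x) = x := fun x => σ.apply_symm_apply x
  have h2 : ∀ x, B ((σ⁻¹ : V ≃ₗ[ℤ] V) x) c = B x (σ c) := by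
    intro x
    have h := hσ ((σ⁻¹ : V ≃ₗ[ℤ] V) x) c
    rw [hss] at h
    exact h.symm
  have hmap : ((τ⁻¹ : V ≃ₗ[ℤ] V) : V →ₗ[ℤ] V)
      = f + (LinearMap.toSpanSingleton ℤ V c).comp (B.flip (σ c)) := by
    ext x
    rw [LinearMap.add_apply, LinearMap.comp_apply, hbridge, LinearMap.flip_apply]
    simp only [LinearEquiv.coe_coe, hf]
    have h1 : τ ((σ⁻¹ : V ≃ₗ[ℤ] V) x + B x (σ c) • c) = x := by
      rw [hτ]
      have hb : B ((σ⁻¹ : V ≃ₗ[ℤ] V) x + B x (σ c) • c) c = -(B x (σ c)) := by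
        rw [← LinearMap.flip_apply (f := B), map_add, map_zsmul, LinearMap.flip_apply,
          LinearMap.flip_apply, h2, hc, zsmul_eq_mul, Int.cast_id]
        ring
      rw [hb, neg_zsmul, add_neg_cancel_right, hss]
    calc (τ⁻¹ : V ≃ₗ[ℤ] V) x
        = (τ⁻¹ : V ≃ₗ[ℤ] V) (τ ((σ⁻¹ : V ≃ₗ[ℤ] V) x + B x (σ c) • c)) := by rw [h1]
      _ = _ := τ.symm_apply_apply _
  -- matrix form of τ⁻¹
  have hN : LinearMap.toMatrix b b ((τ⁻¹ : V ≃ₗ[ℤ] V) : V →ₗ[ℤ] V)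
      = A + Matrix.of (fun i j => w i * r j) := by
    rw [hmap, map_add]
    congr 1
    ext i j
    rw [LinearMap.toMatrix_apply, Matrix.of_apply, LinearMap.comp_apply,
      LinearMap.flip_apply, hbridge, map_zsmul b.repr,
      show ((B (b j) (σ c)) • (b.repr c)) i = (B (b j) (σ c)) • ((b.repr c) i) from
        map_zsmul (Finsupp.applyAddHom i) _ _,
      zsmul_eq_mul, Int.cast_id, hw, hr]
    ring
  -- invariance of B under powers of σ
  have hpow : ∀ (n : ℕ) (x y : V), B ((σ ^ n) x) ((σ ^ n) y) = B x y := by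
    intro n
    induction n with
    | zero => intro x y; simp
    | succ n ih =>
        intro x y
        have e1 : (σ ^ (n + 1)) x = (σ ^ n) (σ x) := by rw [pow_succ]; rfl
        have e2 : (σ ^ (n + 1)) y = (σ ^ n) (σ y) := by rw [pow_succ]; rfl
        rw [e1, e2, ih, hσ]
  -- the coefficient computation
  have hg : ∀ n : ℕ, ∑ j : ι, r j * ∑ k : ι, (A ^ n) j k * w k = B c ((σ ^ (n + 1)) c) := by
    intro n
    have hAn : ∀ j : ι, ∑ k : ι, (A ^ n) j k * w k
        = b.repr (((σ⁻¹ : V ≃ₗ[ℤ] V) ^ n) c) j := by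
      intro j
      have hfn : ((((σ⁻¹ : V ≃ₗ[ℤ] V) ^ n) : V ≃ₗ[ℤ] V) : V →ₗ[ℤ] V) = f ^ n := by
        rw [hf]
        exact map_pow (LinearEquiv.automorphismGroup.toLinearMapMonoidHom) _ n
      have := congrFun (LinearMap.toMatrix_mulVec_repr b b (f ^ n) c) j
      rw [← LinearMap.toMatrix_pow, ← hA, ← hfn, LinearEquiv.coe_coe] at this
      rw [← this]
      simp [Matrix.mulVec, dotProduct, hw]
    simp_rw [hAn]
    set y : V := ((σ⁻¹ : V ≃ₗ[ℤ] V) ^ n) c with hy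
    have hsum : ∑ j : ι, r j * b.repr y j = B y (σ c) := by
      conv_rhs => rw [← b.sum_repr y]
      rw [map_sum, LinearMap.sum_apply]
      apply Finset.sum_congr rfl
      intro j _
      rw [LinearMap.map_smul, LinearMap.smul_apply, smul_eq_mul, hr]
      ring
    rw [hsum]
    have hyc : (σ ^ n) y = c := by
      rw [hy, inv_pow]
      exact (σ ^ n).apply_symm_apply c
    have hsc : (σ ^ n) (σ c) = (σ ^ (n + 1)) c := by rw [pow_succ]; rfl
    calc B y (σ c) = B ((σ ^ n) y) ((σ ^ n) (σ c)) := (hpow n y (σ c)).symm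
      _ = B c ((σ ^ (n + 1)) c) := by rw [hyc, hsc]
  -- assemble
  set u' : ι → ℤ⟦X⟧ := fun i => -(X * C (R := ℤ) (w i)) with hu'
  set v' : ι → ℤ⟦X⟧ := fun j => C (R := ℤ) (r j) with hv'
  set W : Matrix ι ι ℤ := Matrix.of (fun i j => w i * r j) with hW
  have hcolrow : Matrix.replicateCol Unit u' * Matrix.replicateRow Unit v'
      = -((X : ℤ⟦X⟧) • W.map (C (R := ℤ))) := by
    ext i j
    simp only [Matrix.mul_apply, Matrix.replicateCol_apply, Matrix.replicateRow_apply, Finset.univ_unique,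
      Finset.sum_singleton, Matrix.neg_apply, Matrix.smul_apply, Matrix.map_apply, hW,
      Matrix.of_apply, smul_eq_mul, hu', hv']
    rw [show (C (R := ℤ)) (w i * r j) = C (R := ℤ) (w i) * C (R := ℤ) (r j) from map_mul _ _ _, neg_mul, mul_assoc]
  have hsplit : (1 : Matrix ι ι ℤ⟦X⟧) - (X : ℤ⟦X⟧) • (A + W).map (C (R := ℤ))
      = ((1 : Matrix ι ι ℤ⟦X⟧) - (X : ℤ⟦X⟧) • A.map (C (R := ℤ)))
        + Matrix.replicateCol Unit u' * Matrix.replicateRow Unit v' := by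
    rw [hcolrow, Matrix.map_add _ (fun a₁ a₂ => map_add (C (R := ℤ)) a₁ a₂), smul_add]
    abel
  have hU : IsUnit ((1 : Matrix ι ι ℤ⟦X⟧) - (X : ℤ⟦X⟧) • A.map (C (R := ℤ))).det :=
    IsUnit.of_mul_eq_one _ (by rw [← Matrix.det_mul, stmt7_geomInv, Matrix.det_one])
  have hInv : ((1 : Matrix ι ι ℤ⟦X⟧) - (X : ℤ⟦X⟧) • A.map (C (R := ℤ)))⁻¹
      = Matrix.of fun i j => mk fun k => (A ^ k) i j :=
    Matrix.inv_eq_right_inv (stmt7_geomInv A)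
  rw [show detOneSubT b ((τ⁻¹ : V ≃ₗ[ℤ] V) : V →ₗ[ℤ] V)
      = ((1 : Matrix ι ι ℤ⟦X⟧) - (X : ℤ⟦X⟧) • (A + W).map (C (R := ℤ))).det by
    rw [detOneSubT, hN]]
  rw [hsplit, Matrix.det_add_replicateCol_mul_replicateRow hU u' v', hInv, stmt7_detUnit]
  have := stmt7_scalar A w r (fun n => B c ((σ ^ (n + 1)) c)) hg
  simp only [hu', hv', Matrix.of_apply] at this ⊢
  rw [this]
  have : detOneSubT b ((σ⁻¹ : V ≃ₗ[ℤ] V) : V →ₗ[ℤ] V)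
      = ((1 : Matrix ι ι ℤ⟦X⟧) - (X : ℤ⟦X⟧) • A.map (C (R := ℤ))).det := rfl
  rw [this]
  congr 1
  apply PowerSeries.ext
  intro n
  rw [coeff_mk, coeff_mk]
  cases n with
  | zero => simp
  | succ n => simp
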